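/- arXiv:1410.6960 — 14 statements merged into one kernel-verified Lean document; each statement's English description precedes it below -/
import Mathlib

section
/- Let c be an S-closure operator on L^Y and let 𝒮_c = {A ∈ L^Y : A = c(A)} be its set of fixed points. Then 𝒮_c is an S-closure system in ⟨L^Y, ⊆⟩; in particular, for every ⟨f, g⟩ ∈ S and every fixed point A of c one has c(g(A)) = g(A). -/
/-- A complete residuated lattice: a complete lattice with a commutative, associative
multiplication whose neutral element is the top element and which distributes over
arbitrary suprema. -/
class CompleteResiduatedLattice (L : Type*) extends CompleteLattice L, CommMonoid L where
  mul_sSup : ∀ (a : L) (s : Set L), a * sSup s = ⨆ b ∈ s, a * b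
  one_eq_top : (1 : L) = ⊤

namespace FAIparam

variable {L : Type*} {Y : Type*} {X : Type*}

/-- A fuzzy attribute implication (FAI): a pair (antecedent, consequent) of L-sets in Y. -/
abbrev FAI (L Y : Type*) := (Y → L) × (Y → L)

/-- A pair of operators on L-sets in Y. -/
abbrev OpPair (L Y : Type*) := ((Y → L) → (Y → L)) × ((Y → L) → (Y → L))

/-- S is a parameterization: every pair in S is a monotone Galois connection, the identity
pair belongs to S, and S is closed under composition ⟨f₁,g₁⟩∘⟨f₂,g₂⟩ = ⟨f₁∘f₂, g₂∘g₁⟩. -/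
def IsParam [CompleteResiduatedLattice L] (S : Set (OpPair L Y)) : Prop :=
  (∀ p ∈ S, ∀ A B : Y → L, p.1 A ≤ B ↔ A ≤ p.2 B) ∧
  (((id, id) : OpPair L Y) ∈ S) ∧
  (∀ p ∈ S, ∀ q ∈ S, ((p.1 ∘ q.1, q.2 ∘ p.2) : OpPair L Y) ∈ S)

/-- M ⊨^S A ⇒ B : for every ⟨f,g⟩ ∈ S, f(A) ⊆ M implies f(B) ⊆ M. -/
def Sat [CompleteResiduatedLattice L] (S : Set (OpPair L Y)) (M : Y → L) (φ : FAI L Y) : Prop :=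
  ∀ p ∈ S, p.1 φ.1 ≤ M → p.1 φ.2 ≤ M

/-- The set Mod^S(Th) of S-models of a theory Th. -/
def ModS [CompleteResiduatedLattice L] (S : Set (OpPair L Y)) (Th : Set (FAI L Y)) :
    Set (Y → L) :=
  {M | ∀ φ ∈ Th, Sat S M φ}

/-- Semantic entailment Th ⊨^S φ, i.e. Mod^S(Th) ⊆ Mod^S({φ}). -/
def Entails [CompleteResiduatedLattice L] (S : Set (OpPair L Y)) (Th : Set (FAI L Y))
    (φ : FAI L Y) : Prop :=
  ModS S Th ⊆ ModS S {φ}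

/-- [A]^S_Th : the least S-model of Th containing A (intersection of all such models). -/
def clS [CompleteResiduatedLattice L] (S : Set (OpPair L Y)) (Th : Set (FAI L Y))
    (A : Y → L) : Y → L :=
  sInf {M | M ∈ ModS S Th ∧ A ≤ M}

/-- S-closure operator on L^Y. -/
def IsSClosureOp [CompleteResiduatedLattice L] (S : Set (OpPair L Y))
    (c : (Y → L) → (Y → L)) : Prop :=
  (∀ A, A ≤ c A) ∧ (∀ A B, A ≤ B → c A ≤ c B) ∧
  (∀ p ∈ S, ∀ A, c (p.2 (c A)) ≤ p.2 (c A))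

/-- S-closure system in ⟨L^Y, ⊆⟩. -/
def IsSClosureSys [CompleteResiduatedLattice L] (S : Set (OpPair L Y))
    (𝒮 : Set (Y → L)) : Prop :=
  (∀ T ⊆ 𝒮, sInf T ∈ 𝒮) ∧ (∀ p ∈ S, ∀ M ∈ 𝒮, p.2 M ∈ 𝒮)

/-- c_𝒮(A) = ⋂{B ∈ 𝒮 : A ⊆ B}. -/
def clSys [CompleteResiduatedLattice L] (𝒮 : Set (Y → L)) (A : Y → L) : Y → L :=
  sInf {B | B ∈ 𝒮 ∧ A ≤ B}

/-- I ⊨^S A ⇒ B for an L-context ⟨X,Y,I⟩ (with I curried, I x = I_x). -/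
def CtxSat [CompleteResiduatedLattice L] (S : Set (OpPair L Y)) (I : X → Y → L)
    (φ : FAI L Y) : Prop :=
  ∀ x, Sat S (I x) φ

/-- S_g : the set of upper adjoints occurring in S. -/
def Sg [CompleteResiduatedLattice L] (S : Set (OpPair L Y)) : Set ((Y → L) → (Y → L)) :=
  {g | ∃ f, (f, g) ∈ S}

/-- F^↑ = ⋂{g(I_x) : ⟨x,g⟩ ∈ F}. -/
def upOp [CompleteResiduatedLattice L] (I : X → Y → L)
    (F : Set (X × ((Y → L) → (Y → L)))) : Y → L :=
  ⨅ xg ∈ F, xg.2 (I xg.1)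

/-- G^↓ = {⟨x,g⟩ ∈ X × S_g : G ⊆ g(I_x)}. -/
def downOp [CompleteResiduatedLattice L] (S : Set (OpPair L Y)) (I : X → Y → L)
    (G : Y → L) : Set (X × ((Y → L) → (Y → L))) :=
  {xg | xg.2 ∈ Sg S ∧ G ≤ xg.2 (I xg.1)}

/-- G^{↓↑} = ⋂{g(I_x) : x ∈ X, ⟨f,g⟩ ∈ S, G ⊆ g(I_x)}. -/
def dnup [CompleteResiduatedLattice L] (S : Set (OpPair L Y)) (I : X → Y → L)
    (G : Y → L) : Y → L :=
  upOp I (downOp S I G)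

/-- Σ is S-complete in ⟨X,Y,I⟩. -/
def SComplete [CompleteResiduatedLattice L] (S : Set (OpPair L Y)) (Th : Set (FAI L Y))
    (I : X → Y → L) : Prop :=
  ∀ A B : Y → L, Entails S Th (A, B) ↔ CtxSat S I (A, B)

/-- Σ is an S-base of ⟨X,Y,I⟩. -/
def SBase [CompleteResiduatedLattice L] (S : Set (OpPair L Y)) (Th : Set (FAI L Y))
    (I : X → Y → L) : Prop :=
  SComplete S Th I ∧ ∀ Th' ⊂ Th, ¬ SComplete S Th' I

/-- S-provability: axioms A∪B ⇒ A, assumptions from Th, rule (Cut) and rule (F). -/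
inductive ProvS [CompleteResiduatedLattice L] (S : Set (OpPair L Y)) (Th : Set (FAI L Y)) :
    FAI L Y → Prop
  | ax (A B : Y → L) : ProvS S Th (A ⊔ B, A)
  | hyp {φ : FAI L Y} (h : φ ∈ Th) : ProvS S Th φ
  | cut {A B C D : Y → L} : ProvS S Th (A, B) → ProvS S Th (B ⊔ C, D) → ProvS S Th (A ⊔ C, D)
  | mul {A B : Y → L} {p : OpPair L Y} (hp : p ∈ S) : ProvS S Th (A, B) → ProvS S Th (p.1 A, p.1 B)

/-- Provability using the axioms and (Cut) as the only inference rule. -/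
inductive ProvCut [CompleteResiduatedLattice L] (Th : Set (FAI L Y)) : FAI L Y → Prop
  | ax (A B : Y → L) : ProvCut Th (A ⊔ B, A)
  | hyp {φ : FAI L Y} (h : φ ∈ Th) : ProvCut Th φ
  | cut {A B C D : Y → L} : ProvCut Th (A, B) → ProvCut Th (B ⊔ C, D) → ProvCut Th (A ⊔ C, D)

/-- Residuum a → b = ⋁{c : a ⊗ c ≤ b}. -/
def resid [CompleteResiduatedLattice L] (a b : L) : L := sSup {c | a * c ≤ b}

/-- Subsethood degree S(A,B) = ⋀_{y∈Y} (A(y) → B(y)). -/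
def subDeg [CompleteResiduatedLattice L] (A B : Y → L) : L := ⨅ y, resid (A y) (B y)

/-- c ⊗ B, pointwise. -/
def scMul [CompleteResiduatedLattice L] (c : L) (B : Y → L) : Y → L := fun y => c * B y

/-- ||A ⇒ B||^S_M = ⋁{c ∈ L : M ⊨^S A ⇒ c ⊗ B}. -/
def truthDeg [CompleteResiduatedLattice L] (S : Set (OpPair L Y)) (M A B : Y → L) : L :=
  sSup {c | Sat S M (A, scMul c B)}

/-- ||A ⇒ B||^S_Th = ⋀_{M ∈ Mod^S(Th)} ||A ⇒ B||^S_M. -/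
def entDeg [CompleteResiduatedLattice L] (S : Set (OpPair L Y)) (Th : Set (FAI L Y))
    (A B : Y → L) : L :=
  ⨅ M ∈ ModS S Th, truthDeg S M A B

/-- Immediate consequence operator t^S_Th. -/
def tOp [CompleteResiduatedLattice L] (S : Set (OpPair L Y)) (Th : Set (FAI L Y))
    (M : Y → L) : Y → L :=
  M ⊔ sSup {N | ∃ φ ∈ Th, ∃ p ∈ S, p.1 φ.1 ≤ M ∧ N = p.1 φ.2}

/-- S-pseudo-intents, defined by well-founded recursion on ⊊ (L^Y is finite). -/
noncomputable def IsPseudoIntent [CompleteResiduatedLattice L] [Finite L] [Finite Y]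
    (dn : (Y → L) → (Y → L)) : (Y → L) → Prop :=
  (wellFounded_lt (α := Y → L)).fix
    (fun P rec => P < dn P ∧ ∀ Q, ∀ h : Q < P, rec Q h → dn Q ≤ P)


/-- the fixed points of an S-closure operator form an S-closure system;
in particular every upper adjoint image of a fixed point is again a fixed point. -/
theorem fixedPoints_isSClosureSys
    {L Y : Type*} [CompleteResiduatedLattice L] [Nonempty Y]
    (S : Set (OpPair L Y)) (hS : IsParam S)
    (c : (Y → L) → (Y → L)) (hc : IsSClosureOp S c) :
    IsSClosureSys S {A : Y → L | A = c A} ∧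
      ∀ p ∈ S, ∀ A : Y → L, A = c A → c (p.2 A) = p.2 A := by
  obtain ⟨hext, hmono, hidem⟩ := hc
  have key : ∀ p ∈ S, ∀ A : Y → L, A = c A → c (p.2 A) = p.2 A := by
    intro p hp A hA
    refine le_antisymm ?_ (hext _)
    calc c (p.2 A) = c (p.2 (c A)) := by rw [← hA]
      _ ≤ p.2 (c A) := hidem p hp A
      _ = p.2 A := by rw [← hA]
  refine ⟨⟨?_, ?_⟩, key⟩
  · intro T hT
    have : c (sInf T) ≤ sInf T := by
      apply le_sInf
      intro A hA
      calc c (sInf T) ≤ c A := hmono _ _ (sInf_le hA)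
        _ = A := (hT hA).symm
    exact (le_antisymm this (hext _)).symm
  · intro p hp M hM
    exact (key p hp M hM).symm

end FAIparam
end

section
/- Let 𝒮 be an S-closure system in ⟨L^Y, ⊆⟩ and define c_𝒮 : L^Y → L^Y by c_𝒮(A) = ⋂{B ∈ 𝒮 : A ⊆ B}. Then c_𝒮 is an S-closure operator on L^Y. -/
namespace FAIparam

variable {L : Type*} {Y : Type*} {X : Type*}

/-- the operator c_𝒮 induced by an S-closure system 𝒮 is an
S-closure operator. -/
theorem clSys_isSClosureOp
    {L Y : Type*} [CompleteResiduatedLattice L] [Nonempty Y]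
    (S : Set (OpPair L Y)) (hS : IsParam S)
    (𝒮 : Set (Y → L)) (h𝒮 : IsSClosureSys S 𝒮) :
    IsSClosureOp S (clSys 𝒮) := by
  have hcmem : ∀ A : Y → L, clSys 𝒮 A ∈ 𝒮 := by
    intro A
    exact h𝒮.1 _ (fun B hB => hB.1)
  refine ⟨fun A => le_sInf (fun B hB => hB.2), fun A B hAB => ?_, fun p hp A => ?_⟩
  · exact sInf_le_sInf (fun M hM => ⟨hM.1, hAB.trans hM.2⟩)
  · exact sInf_le ⟨h𝒮.2 p hp _ (hcmem A), le_refl _⟩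

end FAIparam
end

section
/- The maps c ↦ 𝒮_c = {A ∈ L^Y : A = c(A)} and 𝒮 ↦ c_𝒮 (with c_𝒮(A) = ⋂{B ∈ 𝒮 : A ⊆ B}) are mutually inverse between S-closure operators and S-closure systems: for every S-closure operator c one has c = c_{𝒮_c}, and for every S-closure system 𝒮 one has 𝒮 = 𝒮_{c_𝒮}. -/
namespace FAIparam

variable {L : Type*} {Y : Type*} {X : Type*}

/-- the maps c ↦ 𝒮_c and 𝒮 ↦ c_𝒮 are mutually inverse between
S-closure operators and S-closure systems. -/
theorem sClosureOp_sClosureSys_mutually_inverse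
    {L Y : Type*} [CompleteResiduatedLattice L] [Nonempty Y]
    (S : Set (OpPair L Y)) (hS : IsParam S) :
    (∀ c : (Y → L) → (Y → L), IsSClosureOp S c → c = clSys {A : Y → L | A = c A}) ∧
    (∀ 𝒮 : Set (Y → L), IsSClosureSys S 𝒮 → 𝒮 = {A : Y → L | A = clSys 𝒮 A}) := by
  obtain ⟨-, hid, -⟩ := hS
  constructor
  · intro c hc
    obtain ⟨hext, hmono, hcl⟩ := hc
    have hidem : ∀ A, c (c A) = c A := by
      intro A
      exact le_antisymm (hcl _ hid A) (hext _)
    funext A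
    apply le_antisymm
    · apply le_sInf
      rintro B ⟨hB, hAB⟩
      calc c A ≤ c B := hmono _ _ hAB
        _ = B := hB.symm
    · exact sInf_le ⟨(hidem A).symm, hext A⟩
  · intro 𝒮 h𝒮
    obtain ⟨hinf, -⟩ := h𝒮
    ext A
    constructor
    · intro hA
      show A = clSys 𝒮 A
      exact le_antisymm (le_sInf (by rintro B ⟨-, hAB⟩; exact hAB)) (sInf_le ⟨hA, le_rfl⟩)
    · intro hA
      have : clSys 𝒮 A ∈ 𝒮 := hinf _ (by rintro B ⟨hB, -⟩; exact hB)
      exact hA ▸ this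

end FAIparam
end

section
/- For every set Σ of fuzzy attribute implications in Y, the set Mod^S(Σ) of S-models of Σ is an S-closure system: it is closed under arbitrary pointwise intersections, and M ∈ Mod^S(Σ) implies g(M) ∈ Mod^S(Σ) for every ⟨f, g⟩ ∈ S. -/
namespace FAIparam

variable {L : Type*} {Y : Type*} {X : Type*}

/-- Mod^S(Σ) is an S-closure system: closed under arbitrary pointwise
intersections and under all upper adjoints of S. -/
theorem modS_isSClosureSys
    {L Y : Type*} [CompleteResiduatedLattice L] [Nonempty Y]
    (S : Set (OpPair L Y)) (hS : IsParam S)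
    (Th : Set (FAI L Y)) :
    (∀ T ⊆ ModS S Th, sInf T ∈ ModS S Th) ∧
      (∀ p ∈ S, ∀ M ∈ ModS S Th, p.2 M ∈ ModS S Th) := by
  obtain ⟨hgal, -, hcomp⟩ := hS
  constructor
  · intro T hT φ hφ p hp h
    refine le_sInf fun M hM => ?_
    exact hT hM φ hφ p hp (h.trans (sInf_le hM))
  · intro p hp M hM φ hφ q hq h
    rw [← hgal p hp] at h ⊢
    have hc := hcomp p hp q hq
    exact hM φ hφ _ hc h

end FAIparam
end

section
/- Let 𝒮 be an S-closure system in ⟨L^Y, ⊆⟩ and let c_𝒮(A) = ⋂{B ∈ 𝒮 : A ⊆ B}. Then for the set of implications Σ_𝒮 = {A ⇒ c_𝒮(A) : A ∈ L^Y} one has Mod^S(Σ_𝒮) = 𝒮. -/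
namespace FAIparam

variable {L : Type*} {Y : Type*} {X : Type*}

/-- for an S-closure system 𝒮 and Σ_𝒮 = {A ⇒ c_𝒮(A) : A ∈ L^Y},
one has Mod^S(Σ_𝒮) = 𝒮. -/
theorem modS_of_clSys_implications
    {L Y : Type*} [CompleteResiduatedLattice L] [Nonempty Y]
    (S : Set (OpPair L Y)) (hS : IsParam S)
    (𝒮 : Set (Y → L)) (h𝒮 : IsSClosureSys S 𝒮) :
    ModS S {φ : FAI L Y | ∃ A : Y → L, φ = (A, clSys 𝒮 A)} = 𝒮 := by
  obtain ⟨hgal, hid, hcomp⟩ := hS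
  ext M
  constructor
  · intro hM
    have h1 := hM (M, clSys 𝒮 M) ⟨M, rfl⟩ (id, id) hid (le_refl M)
    simp only [id_eq] at h1
    have h2 : clSys 𝒮 M ∈ 𝒮 := h𝒮.1 _ (fun B hB => hB.1)
    have h3 : M ≤ clSys 𝒮 M := le_sInf (fun B hB => hB.2)
    have heq : clSys 𝒮 M = M := le_antisymm h1 h3
    rwa [← heq]
  · intro hM φ hφ p hp hle
    obtain ⟨A, rfl⟩ := hφ
    have hA : A ≤ p.2 M := (hgal p hp A M).mp hle
    have hpm : p.2 M ∈ 𝒮 := h𝒮.2 p hp M hM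
    have hcl : clSys 𝒮 A ≤ p.2 M := sInf_le ⟨hpm, hA⟩
    exact (hgal p hp _ M).mpr hcl

end FAIparam
end

section
/- For every set Σ of FAIs in Y and every FAI A ⇒ B, the following are equivalent: (1) Σ ⊨^S A ⇒ B; (2) [M]^S_Σ ⊨^S A ⇒ B for all M ∈ L^Y; (3) [A]^S_Σ ⊨^S A ⇒ B; (4) B ⊆ [A]^S_Σ. -/
namespace FAIparam

variable {L : Type*} {Y : Type*} {X : Type*}

theorem clS_mem' [CompleteResiduatedLattice L]
    (S : Set (OpPair L Y)) (Th : Set (FAI L Y)) (M : Y → L) :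
    clS S Th M ∈ ModS S Th := by
  intro φ hφ p hp hle
  exact le_sInf fun N hN => hN.1 φ hφ p hp (hle.trans (sInf_le hN))

theorem le_clS' [CompleteResiduatedLattice L]
    (S : Set (OpPair L Y)) (Th : Set (FAI L Y)) (M : Y → L) :
    M ≤ clS S Th M :=
  le_sInf fun _ hN => hN.2

theorem clS_le' [CompleteResiduatedLattice L]
    (S : Set (OpPair L Y)) (Th : Set (FAI L Y)) {M N : Y → L}
    (hN : N ∈ ModS S Th) (hMN : M ≤ N) : clS S Th M ≤ N :=
  sInf_le ⟨hN, hMN⟩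

theorem g_model' [CompleteResiduatedLattice L]
    {S : Set (OpPair L Y)} (hS : IsParam S) {p : OpPair L Y} (hp : p ∈ S)
    {Th : Set (FAI L Y)} {M : Y → L} (hM : M ∈ ModS S Th) :
    p.2 M ∈ ModS S Th := by
  intro φ hφ q hq hle
  have hr := hS.2.2 p hp q hq
  have h1 : p.1 (q.1 φ.1) ≤ M := (hS.1 p hp (q.1 φ.1) M).mpr hle
  have h2 : p.1 (q.1 φ.2) ≤ M := hM φ hφ _ hr h1
  exact (hS.1 p hp (q.1 φ.2) M).mp h2

/-- characterization of semantic entailment under S by least models. -/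
theorem entails_tfae
    {L Y : Type*} [CompleteResiduatedLattice L] [Nonempty Y]
    (S : Set (OpPair L Y)) (hS : IsParam S)
    (Th : Set (FAI L Y)) (A B : Y → L) :
    [Entails S Th (A, B),
     ∀ M : Y → L, Sat S (clS S Th M) (A, B),
     Sat S (clS S Th A) (A, B),
     B ≤ clS S Th A].TFAE := by
  tfae_have 1 → 2 := by
    intro h M
    exact h (clS_mem' S Th M) (A, B) rfl
  tfae_have 2 → 3 := fun h => h A
  tfae_have 3 → 4 := by
    intro h
    exact h (id, id) hS.2.1 (le_clS' S Th A)
  tfae_have 4 → 1 := by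
    intro h4 M hM φ hφ
    rw [Set.mem_singleton_iff] at hφ
    subst hφ
    intro p hp hle
    have hA : A ≤ p.2 M := (hS.1 p hp A M).mp hle
    have hmod := g_model' hS hp hM
    have hB : B ≤ p.2 M := h4.trans (clS_le' S Th hmod hA)
    exact (hS.1 p hp B M).mpr hB
  tfae_finish

end FAIparam
end

section
/- Suppose every lower adjoint in S is intensive, i.e., f(M) ⊆ M for all ⟨f, g⟩ ∈ S and all M ∈ L^Y. Then for every set Σ of FAIs and all A, B ∈ L^Y: Σ ⊨^S A ⇒ B if and only if Σ ∪ {0_Y ⇒ A} ⊨^S 0_Y ⇒ B, where 0_Y ∈ L^Y is the empty L-set given by 0_Y(y) = 0 for all y ∈ Y. -/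
namespace FAIparam

variable {L : Type*} {Y : Type*} {X : Type*}

/-- semantic deduction theorem under the assumption that all lower
adjoints in S are intensive. -/
theorem semantic_deduction
    {L Y : Type*} [CompleteResiduatedLattice L] [Nonempty Y]
    (S : Set (OpPair L Y)) (hS : IsParam S)
    (hint : ∀ p ∈ S, ∀ M : Y → L, p.1 M ≤ M)
    (Th : Set (FAI L Y)) (A B : Y → L) :
    Entails S Th (A, B) ↔
      Entails S (Th ∪ {((⊥ : Y → L), A)}) ((⊥ : Y → L), B) := by
  obtain ⟨hgal, hid, hcomp⟩ := hS
  have hmono : ∀ p ∈ S, ∀ {C D : Y → L}, C ≤ D → p.1 C ≤ p.1 D := by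
    intro p hp C D hCD
    exact (hgal p hp _ _).mpr (le_trans hCD ((hgal p hp _ _).mp le_rfl))
  constructor
  · intro h M hM
    intro φ hφ
    simp only [Set.mem_singleton_iff] at hφ
    subst hφ
    intro p hp _
    -- A ≤ M since M models ⊥ ⇒ A via the identity pair
    have hA : A ≤ M := by
      have := hM ((⊥ : Y → L), A) (Or.inr rfl) (id, id) hid (by simp)
      simpa using this
    have hMTh : M ∈ ModS S Th := fun ψ hψ => hM ψ (Or.inl hψ)
    have hsat := h hMTh ((A, B)) rfl p hp (le_trans (hint p hp A) hA)
    exact hsat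
  · intro h M hM
    intro φ hφ
    simp only [Set.mem_singleton_iff] at hφ
    subst hφ
    intro p hp hpA
    -- consider N = p.2 M
    have hNTh : (p.2 M) ∈ ModS S (Th ∪ {((⊥ : Y → L), A)}) := by
      intro ψ hψ q hq hqM
      rcases hψ with hψ | hψ
      · -- ψ ∈ Th : use composition p.1 ∘ q.1 ∈ S
        have hcq := hcomp p hp q hq
        have h1 : (p.1 ∘ q.1) ψ.1 ≤ M := (hgal p hp (q.1 ψ.1) M).mpr hqM
        have h2 := hM ψ hψ _ hcq h1
        exact (hgal p hp (q.1 ψ.2) M).mp h2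
      · -- ψ = ⊥ ⇒ A
        simp only [Set.mem_singleton_iff] at hψ
        subst hψ
        -- q.1 A ≤ p.2 M since p.1 (q.1 A) ≤ p.1 A ≤ M
        refine (hgal p hp _ _).mp ?_
        exact le_trans (hmono p hp (hint q hq A)) hpA
    have := h hNTh ((⊥ : Y → L), B) rfl (id, id) hid (by simp)
    simp only at this
    exact (hgal p hp B M).mpr this

end FAIparam
end

section
/- For every L-context ⟨X, Y, I⟩ and every FAI A ⇒ B, the following are equivalent: (1) I ⊨^S A ⇒ B; (2) M^{↓↑} ⊨^S A ⇒ B for all M ∈ L^Y; (3) A^{↓↑} ⊨^S A ⇒ B; (4) B ⊆ A^{↓↑}; (5) A^↓ ⊆ B^↓. -/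
namespace FAIparam

variable {L : Type*} {Y : Type*} {X : Type*}

/-- characterization of FAIs true in an L-context under S. -/
theorem ctxSat_tfae
    {L Y X : Type*} [CompleteResiduatedLattice L] [Nonempty Y] [Nonempty X]
    (S : Set (OpPair L Y)) (hS : IsParam S) (I : X → Y → L) (A B : Y → L) :
    [CtxSat S I (A, B),
     ∀ M : Y → L, Sat S (dnup S I M) (A, B),
     Sat S (dnup S I A) (A, B),
     B ≤ dnup S I A,
     downOp S I A ⊆ downOp S I B].TFAE := by
  obtain ⟨hG, hid, hcomp⟩ := hS
  have hle : ∀ G : Y → L, G ≤ dnup S I G := by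
    intro G
    refine le_iInf₂ fun xg hxg => hxg.2
  tfae_have 1 → 2 := by
    intro h M p hp hf
    refine le_iInf₂ fun xg hxg => ?_
    obtain ⟨⟨f', hf'⟩, hMle⟩ := hxg
    have hA : p.1 A ≤ xg.2 (I xg.1) :=
      le_trans hf (iInf₂_le xg ⟨⟨f', hf'⟩, hMle⟩)
    have hc := hcomp (f', xg.2) hf' p hp
    have h1 : (f' ∘ p.1) A ≤ I xg.1 := by
      rw [hG _ hc A (I xg.1)]
      exact le_trans ((hG p hp A _).mp hA) le_rfl
    have h2 := h xg.1 _ hc h1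
    exact (hG p hp B _).mpr ((hG _ hc B (I xg.1)).mp h2)
  tfae_have 2 → 3 := fun h => h A
  tfae_have 3 → 4 := by
    intro h
    have := h (id, id) hid (hle A)
    simpa using this
  tfae_have 4 → 5 := by
    intro h xg hxg
    refine ⟨hxg.1, le_trans h ?_⟩
    exact iInf₂_le xg hxg
  tfae_have 5 → 1 := by
    intro h x p hp hf
    have hA : A ≤ p.2 (I x) := (hG p hp A (I x)).mp hf
    have hmem : (x, p.2) ∈ downOp S I A := ⟨⟨p.1, hp⟩, hA⟩
    have := (h hmem).2
    exact (hG p hp B (I x)).mpr this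
  tfae_finish

end FAIparam
end

section
/- If L and Y are finite, then the set Σ_I = {P ⇒ P^{↓↑} : P is an S-pseudo-intent of ⟨X, Y, I⟩} is S-complete in ⟨X, Y, I⟩, i.e., for all A, B ∈ L^Y: Σ_I ⊨^S A ⇒ B iff I ⊨^S A ⇒ B. -/
namespace FAIparam

variable {L : Type*} {Y : Type*} {X : Type*}

section Aux

variable [CompleteResiduatedLattice L]

lemma isPseudoIntent_iff [Finite L] [Finite Y] (dn : (Y → L) → (Y → L)) (P : Y → L) :
    IsPseudoIntent dn P ↔ P < dn P ∧ ∀ Q, Q < P → IsPseudoIntent dn Q → dn Q ≤ P := by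
  unfold IsPseudoIntent
  rw [WellFounded.fix_eq]

lemma le_dnup (S : Set (OpPair L Y)) (I : X → Y → L) (A : Y → L) :
    A ≤ dnup S I A :=
  le_iInf₂ fun _ h => h.2

lemma dnup_mono (S : Set (OpPair L Y)) (I : X → Y → L) {A B : Y → L} (h : A ≤ B) :
    dnup S I A ≤ dnup S I B :=
  le_iInf₂ fun xg hxg => iInf₂_le xg ⟨hxg.1, le_trans h hxg.2⟩

lemma dnup_le_of_mem (S : Set (OpPair L Y)) (I : X → Y → L) {A : Y → L}
    {x : X} {p : OpPair L Y} (hp : p ∈ S) (hA : A ≤ p.2 (I x)) :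
    dnup S I A ≤ p.2 (I x) :=
  iInf₂_le (x, p.2) ⟨⟨p.1, hp⟩, hA⟩

lemma ctxSat_iff (S : Set (OpPair L Y)) (hS : IsParam S) (I : X → Y → L) (A B : Y → L) :
    CtxSat S I (A, B) ↔ B ≤ dnup S I A := by
  constructor
  · intro h
    refine le_iInf₂ fun xg hxg => ?_
    obtain ⟨⟨f, hf⟩, hA⟩ := hxg
    have h1 : f A ≤ I xg.1 := (hS.1 (f, xg.2) hf A (I xg.1)).2 hA
    have h2 := h xg.1 (f, xg.2) hf h1
    exact (hS.1 (f, xg.2) hf B (I xg.1)).1 h2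
  · intro h x p hp hA
    have hA' : A ≤ p.2 (I x) := (hS.1 p hp A (I x)).1 hA
    exact (hS.1 p hp B (I x)).2
      (le_trans h (dnup_le_of_mem S I hp hA'))

/-- Each row I x satisfies A ⇒ A^{↓↑}. -/
lemma row_sat_dnup (S : Set (OpPair L Y)) (hS : IsParam S) (I : X → Y → L)
    (A : Y → L) (x : X) : Sat S (I x) (A, dnup S I A) := by
  intro p hp hA
  have h1 : A ≤ p.2 (I x) := (hS.1 p hp A (I x)).1 hA
  exact (hS.1 p hp (dnup S I A) (I x)).2 (dnup_le_of_mem S I hp h1)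

/-- Models of any theory are closed under the upper adjoints in S. -/
lemma model_comp (S : Set (OpPair L Y)) (hS : IsParam S) (Th : Set (FAI L Y))
    {M : Y → L} (hM : M ∈ ModS S Th) {p : OpPair L Y} (hp : p ∈ S) :
    p.2 M ∈ ModS S Th := by
  intro φ hφ q hq hA
  have h1 : p.1 (q.1 φ.1) ≤ M := (hS.1 p hp (q.1 φ.1) M).2 hA
  have hr := hS.2.2 p hp q hq
  have h2 := hM φ hφ (p.1 ∘ q.1, q.2 ∘ p.2) hr h1
  exact (hS.1 p hp (q.1 φ.2) M).1 h2

/-- Every model of the pseudo-intent theory is ↓↑-closed. -/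
lemma model_dnup_le [Finite L] [Finite Y] (S : Set (OpPair L Y)) (hS : IsParam S)
    (I : X → Y → L) {M : Y → L}
    (hM : M ∈ ModS S {φ : FAI L Y | ∃ P : Y → L,
        IsPseudoIntent (dnup S I) P ∧ φ = (P, dnup S I P)}) :
    dnup S I M ≤ M := by
  by_contra h
  have key : ∀ Q, IsPseudoIntent (dnup S I) Q → Q ≤ M → dnup S I Q ≤ M := by
    intro Q hQ hQM
    exact hM (Q, dnup S I Q) ⟨Q, hQ, rfl⟩ (id, id) hS.2.1 hQM
  have hMP : IsPseudoIntent (dnup S I) M := by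
    rw [isPseudoIntent_iff]
    refine ⟨lt_of_le_of_ne (le_dnup S I M) (fun e => h (le_of_eq e.symm)), ?_⟩
    exact fun Q hQlt hQ => key Q hQ hQlt.le
  exact h (key M hMP le_rfl)

end Aux

/-- for finite L and Y, the set of implications P ⇒ P^{↓↑} over all
S-pseudo-intents P is S-complete in ⟨X,Y,I⟩. -/
theorem pseudoIntents_sComplete
    {L Y X : Type*} [CompleteResiduatedLattice L] [Finite L] [Finite Y]
    [Nonempty Y] [Nonempty X]
    (S : Set (OpPair L Y)) (hS : IsParam S) (I : X → Y → L) :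
    ∀ A B : Y → L,
      Entails S {φ : FAI L Y | ∃ P : Y → L,
          IsPseudoIntent (dnup S I) P ∧ φ = (P, dnup S I P)} (A, B) ↔
        CtxSat S I (A, B) := by
  intro A B
  constructor
  · intro h x
    have hx : I x ∈ ModS S {φ : FAI L Y | ∃ P : Y → L,
        IsPseudoIntent (dnup S I) P ∧ φ = (P, dnup S I P)} := by
      intro φ hφ
      obtain ⟨P, hP, rfl⟩ := hφ
      exact row_sat_dnup S hS I P x
    exact h hx (A, B) rfl
  · intro h M hM φ hφ
    obtain rfl : φ = (A, B) := hφ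
    have hB : B ≤ dnup S I A := (ctxSat_iff S hS I A B).1 h
    intro p hp hA
    have hA' : A ≤ p.2 M := (hS.1 p hp A M).1 hA
    have hgm : dnup S I (p.2 M) ≤ p.2 M :=
      model_dnup_le S hS I (model_comp S hS _ hM hp)
    have : B ≤ p.2 M := le_trans hB (le_trans (dnup_mono S I hA') hgm)
    exact (hS.1 p hp B M).2 this

end FAIparam
end

section
/- Soundness: for every set Σ of FAIs and every FAI A ⇒ B, if Σ ⊢^S A ⇒ B then Σ ⊨^S A ⇒ B. -/
namespace FAIparam

variable {L : Type*} {Y : Type*} {X : Type*}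

/-- soundness: Σ ⊢^S A ⇒ B implies Σ ⊨^S A ⇒ B. -/
theorem provS_sound
    {L Y : Type*} [CompleteResiduatedLattice L] [Nonempty Y]
    (S : Set (OpPair L Y)) (hS : IsParam S)
    (Th : Set (FAI L Y)) (A B : Y → L)
    (h : ProvS S Th (A, B)) :
    Entails S Th (A, B) := by
  intro M hM φ hφ
  rcases hφ with rfl
  suffices hgen : ∀ ψ : FAI L Y, ProvS S Th ψ → Sat S M ψ from hgen _ h
  intro ψ hψ
  induction hψ with
  | ax A B =>
    intro p hp hle
    rw [hS.1 p hp] at hle ⊢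
    exact le_trans le_sup_left hle
  | hyp hmem => exact hM _ hmem
  | cut h1 h2 ih1 ih2 =>
    rename_i A B C D
    intro p hp hle
    have gal := hS.1 p hp
    rw [gal] at hle
    have hB : B ≤ p.2 M := by
      rw [← gal]
      exact ih1 p hp ((gal _ _).mpr (le_trans le_sup_left hle))
    exact ih2 p hp ((gal _ _).mpr (sup_le hB (le_trans le_sup_right hle)))
  | mul hp h ih =>
    rename_i A B q
    intro r hr hle
    exact ih _ (hS.2.2 r hr q hp) hle

end FAIparam
end

section
/- Completeness: if L and Y are finite, then for every set Σ of FAIs and every FAI A ⇒ B, Σ ⊨^S A ⇒ B implies Σ ⊢^S A ⇒ B. -/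
namespace FAIparam

variable {L : Type*} {Y : Type*} {X : Type*}

section Aux

variable [CompleteResiduatedLattice L] {S : Set (OpPair L Y)} {Th : Set (FAI L Y)}

private lemma provS_refl (A : Y → L) : ProvS S Th (A, A) := by
  simpa using ProvS.ax (S := S) (Th := Th) A A

private lemma provS_of_le {A B : Y → L} (hle : B ≤ A) : ProvS S Th (A, B) := by
  have := ProvS.ax (S := S) (Th := Th) B A
  rwa [sup_eq_right.mpr hle] at this

private lemma provS_trans {A M B : Y → L} (h1 : ProvS S Th (A, M))
    (h2 : ProvS S Th (M, B)) : ProvS S Th (A, B) := by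
  have h2' : ProvS S Th (M ⊔ ⊥, B) := by rwa [sup_bot_eq]
  have := ProvS.cut h1 h2'
  rwa [sup_bot_eq] at this

private lemma provS_mon {A C : Y → L} (B : Y → L) (h : ProvS S Th (A, C)) :
    ProvS S Th (A ⊔ B, C) := by
  have h' : ProvS S Th (A ⊔ ⊥, C) := by rwa [sup_bot_eq]
  have := ProvS.cut (ProvS.ax (S := S) (Th := Th) A B) h'
  rwa [sup_bot_eq] at this

private lemma provS_right_sup_self {A C : Y → L} (h : ProvS S Th (A, C)) :
    ProvS S Th (A, A ⊔ C) := by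
  have hax : ProvS S Th (C ⊔ A, A ⊔ C) := provS_of_le (le_of_eq (sup_comm _ _))
  have := ProvS.cut h hax
  rwa [sup_idem] at this

private lemma provS_add {A D C : Y → L} (hAD : A ≤ D) (h1 : ProvS S Th (A, D))
    (h2 : ProvS S Th (A, C)) : ProvS S Th (A, D ⊔ C) := by
  have hD : ProvS S Th (D, C) := by
    have := provS_mon (S := S) (Th := Th) D h2
    rwa [sup_eq_right.mpr hAD] at this
  exact provS_trans h1 (provS_right_sup_self hD)

end Aux

/-- completeness for finite L and Y: Σ ⊨^S A ⇒ B implies Σ ⊢^S A ⇒ B. -/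
theorem provS_complete
    {L Y : Type*} [CompleteResiduatedLattice L] [Finite L] [Finite Y] [Nonempty Y]
    (S : Set (OpPair L Y)) (hS : IsParam S)
    (Th : Set (FAI L Y)) (A B : Y → L)
    (h : Entails S Th (A, B)) :
    ProvS S Th (A, B) := by
  classical
  -- the set of derivable consequents of A
  set T : Set (Y → L) := {C | ProvS S Th (A, C)} with hT
  have hTfin : T.Finite := Set.toFinite T
  -- M : the join of A with all derivable consequents
  set M : Y → L := A ⊔ hTfin.toFinset.sup id with hM
  have hAle : A ≤ M := le_sup_left
  -- every derivable consequent is below M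
  have hmemle : ∀ C, ProvS S Th (A, C) → C ≤ M := by
    intro C hC
    have : C ∈ hTfin.toFinset := by simpa [hT] using hC
    exact le_trans (Finset.le_sup (f := id) this) le_sup_right
  -- ProvS (A, A ⊔ F.sup id) for any finset F of derivable consequents
  have hfin : ∀ F : Finset (Y → L), (∀ C ∈ F, ProvS S Th (A, C)) →
      ProvS S Th (A, A ⊔ F.sup id) := by
    intro F
    induction F using Finset.induction_on with
    | empty => intro _; simpa using provS_refl (S := S) (Th := Th) A
    | @insert C F hC ih =>
      intro hF
      have h1 : ProvS S Th (A, A ⊔ F.sup id) :=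
        ih fun D hD => hF D (Finset.mem_insert_of_mem hD)
      have h2 : ProvS S Th (A, C) := hF C (Finset.mem_insert_self _ _)
      have := provS_add (le_sup_left) h1 h2
      have heq : (A ⊔ F.sup id) ⊔ C = A ⊔ (insert C F).sup id := by
        rw [Finset.sup_insert]
        simp only [id]
        rw [sup_assoc, sup_comm (F.sup id) C]
      rwa [heq] at this
  have hAM : ProvS S Th (A, M) := by
    refine hfin hTfin.toFinset ?_
    intro C hC
    simpa [hT] using hC
  -- M is a model of Th
  have hMod : M ∈ ModS S Th := by
    intro φ hφ p hp hle
    have h1 : ProvS S Th (A, p.1 φ.1) := provS_trans hAM (provS_of_le hle)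
    have h2 : ProvS S Th (p.1 φ.1, p.1 φ.2) := ProvS.mul hp (ProvS.hyp hφ)
    exact hmemle _ (provS_trans h1 h2)
  -- apply the entailment hypothesis with the identity pair
  have hsat : Sat S M (A, B) := h hMod _ rfl
  have hB : B ≤ M := hsat (id, id) hS.2.1 hAle
  exact provS_trans hAM (provS_of_le hB)

end FAIparam
end

section
/- Normalized-proof corollary: Σ ⊢^S A ⇒ B if and only if there exists a subset Σ^S of {f(C) ⇒ f(D) : C ⇒ D ∈ Σ and ⟨f, g⟩ ∈ S} such that A ⇒ B is provable from Σ^S using the axioms and (Cut) as the only inference rule. -/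
namespace FAIparam

variable {L : Type*} {Y : Type*} {X : Type*}

/-- normalized proofs: Σ ⊢^S A ⇒ B iff A ⇒ B is provable, using axioms
and (Cut) only, from some subset of the (F)-images of formulas of Σ. -/
theorem provS_iff_provCut_of_images
    {L Y : Type*} [CompleteResiduatedLattice L] [Nonempty Y]
    (S : Set (OpPair L Y)) (hS : IsParam S)
    (Th : Set (FAI L Y)) (A B : Y → L) :
    ProvS S Th (A, B) ↔
      ∃ Th' : Set (FAI L Y),
        Th' ⊆ {ψ : FAI L Y | ∃ φ ∈ Th, ∃ p ∈ S, ψ = (p.1 φ.1, p.1 φ.2)} ∧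
        ProvCut Th' (A, B) := by
  obtain ⟨hGal, hid, hcomp⟩ := hS
  -- lower adjoints preserve binary sups
  have hsup : ∀ p ∈ S, ∀ A B : Y → L, p.1 (A ⊔ B) = p.1 A ⊔ p.1 B := by
    intro p hp A B
    have mono : ∀ C D : Y → L, C ≤ D → p.1 C ≤ p.1 D := by
      intro C D hCD
      exact (hGal p hp C _).mpr (hCD.trans ((hGal p hp D _).mp le_rfl))
    apply le_antisymm
    · rw [hGal p hp]
      apply sup_le <;> rw [← hGal p hp] <;> [exact le_sup_left; exact le_sup_right]
    · exact sup_le (mono _ _ le_sup_left) (mono _ _ le_sup_right)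
  constructor
  · intro h
    refine ⟨{ψ : FAI L Y | ∃ φ ∈ Th, ∃ p ∈ S, ψ = (p.1 φ.1, p.1 φ.2)}, le_refl _, ?_⟩
    have key : ∀ φ : FAI L Y, ProvS S Th φ → ∀ p ∈ S,
        ProvCut {ψ : FAI L Y | ∃ φ ∈ Th, ∃ p ∈ S, ψ = (p.1 φ.1, p.1 φ.2)} (p.1 φ.1, p.1 φ.2) := by
      intro φ hφ
      induction hφ with
      | ax A B =>
          intro p hp
          have := ProvCut.ax (Th := {ψ : FAI L Y | ∃ φ ∈ Th, ∃ p ∈ S, ψ = (p.1 φ.1, p.1 φ.2)})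
            (p.1 A) (p.1 B)
          simpa [hsup p hp] using this
      | hyp hφ =>
          intro p hp
          exact ProvCut.hyp ⟨_, hφ, p, hp, rfl⟩
      | cut h1 h2 ih1 ih2 =>
          intro p hp
          have e1 := ih1 p hp
          have e2 := ih2 p hp
          simp only [hsup p hp] at e2 ⊢
          exact ProvCut.cut e1 e2
      | mul hq h ih =>
          intro p hp
          have := ih _ (hcomp p hp _ hq)
          simpa using this
    have := key (A, B) h (id, id) hid
    simpa using this
  · rintro ⟨Th', hTh', h⟩
    have gen : ∀ ψ : FAI L Y, ProvCut Th' ψ → ProvS S Th ψ := by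
      intro ψ hψ
      induction hψ with
      | ax A B => exact ProvS.ax A B
      | hyp hψ' =>
          obtain ⟨φ, hφ, p, hp, rfl⟩ := hTh' hψ'
          exact ProvS.mul hp (ProvS.hyp hφ)
      | cut h1 h2 ih1 ih2 => exact ProvS.cut ih1 ih2
    exact gen (A, B) h

end FAIparam
end

section
/- The supremum defining the degree of truth is attained: for all A, B, M ∈ L^Y, M ⊨^S A ⇒ (||A ⇒ B||^S_M) ⊗ B; that is, ||A ⇒ B||^S_M is the greatest element of the set {c ∈ L : M ⊨^S A ⇒ c ⊗ B}. -/
namespace FAIparam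

variable {L : Type*} {Y : Type*} {X : Type*}

/-- the supremum defining ||A ⇒ B||^S_M is attained: it is the greatest
c with M ⊨^S A ⇒ c ⊗ B. -/
theorem truthDeg_isGreatest
    {L Y : Type*} [CompleteResiduatedLattice L] [Nonempty Y]
    (S : Set (OpPair L Y)) (hS : IsParam S)
    (A B M : Y → L) :
    Sat S M (A, scMul (truthDeg S M A B) B) ∧
    IsGreatest {c : L | Sat S M (A, scMul c B)} (truthDeg S M A B) := by
  have key : Sat S M (A, scMul (truthDeg S M A B) B) := by
    intro p hp hA
    rw [(hS.1 p hp) _ M]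
    intro y
    show truthDeg S M A B * B y ≤ p.2 M y
    rw [mul_comm, truthDeg, CompleteResiduatedLattice.mul_sSup]
    apply iSup_le; intro c; apply iSup_le; intro hc
    rw [mul_comm]
    have := hc p hp hA
    have := ((hS.1 p hp) _ M).mp this
    exact this y
  exact ⟨key, key, fun c hc => le_sSup hc⟩

end FAIparam
end

section
/- Pavelka-style completeness: if L and Y are finite, then for every set Σ of FAIs and all A, B ∈ L^Y, the degree of S-provability |A ⇒ B|^S_Σ = ⋁{c ∈ L : Σ ⊢^S A ⇒ c ⊗ B} equals the degree of semantic entailment ||A ⇒ B||^S_Σ. -/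
namespace FAIparam

variable {L : Type*} {Y : Type*} {X : Type*}

section Aux

variable {L : Type*} {Y : Type*} [CompleteResiduatedLattice L]
variable {S : Set (OpPair L Y)} {Th : Set (FAI L Y)}

lemma prov_refl (S : Set (OpPair L Y)) (Th : Set (FAI L Y)) (A : Y → L) :
    ProvS S Th (A, A) := by
  simpa using ProvS.ax (S := S) (Th := Th) A A

lemma prov_bot (S : Set (OpPair L Y)) (Th : Set (FAI L Y)) (A : Y → L) :
    ProvS S Th (A, ⊥) := by
  simpa using ProvS.ax (S := S) (Th := Th) ⊥ A

lemma prov_wkn {A B : Y → L} (E : Y → L) (h : ProvS S Th (A, B)) :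
    ProvS S Th (A ⊔ E, B) := by
  have h1 : ProvS S Th (A ⊔ E, A) := ProvS.ax A E
  have h2 : ProvS S Th (A ⊔ ⊥, B) := by simpa using h
  simpa using ProvS.cut h1 h2

lemma prov_trans {A B C : Y → L} (h1 : ProvS S Th (A, B)) (h2 : ProvS S Th (B, C)) :
    ProvS S Th (A, C) := by
  have h2' : ProvS S Th (B ⊔ ⊥, C) := by simpa using h2
  simpa using ProvS.cut h1 h2'

lemma prov_proj {A B C : Y → L} (h : ProvS S Th (A, B)) (hCB : C ≤ B) :
    ProvS S Th (B, C) := by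
  have := ProvS.ax (S := S) (Th := Th) C B
  rwa [sup_eq_right.mpr hCB] at this

lemma prov_weaken_cons {A B C : Y → L} (h : ProvS S Th (A, B)) (hCB : C ≤ B) :
    ProvS S Th (A, C) :=
  prov_trans h (prov_proj h hCB)

lemma prov_enlarge {A B : Y → L} (h : ProvS S Th (A, B)) :
    ProvS S Th (A, A ⊔ B) := by
  have h1 : ProvS S Th (B ⊔ A, A ⊔ B) := by
    rw [sup_comm B A]
    exact prov_refl S Th (A ⊔ B)
  simpa using ProvS.cut h h1

lemma prov_sup {A C₁ C₂ : Y → L} (h1 : ProvS S Th (A, C₁)) (h2 : ProvS S Th (A, C₂)) :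
    ProvS S Th (A, C₁ ⊔ C₂) := by
  have hw : ProvS S Th (C₁ ⊔ A, C₂) := by
    have := prov_wkn (S := S) (Th := Th) C₁ h2
    rwa [sup_comm A C₁] at this
  have hw2 : ProvS S Th (C₁ ⊔ A, (C₁ ⊔ A) ⊔ C₂) := prov_enlarge hw
  have hw3 : ProvS S Th (C₁ ⊔ A, C₁ ⊔ C₂) := by
    refine prov_weaken_cons hw2 (sup_le (le_sup_of_le_left le_sup_left) le_sup_right)
  simpa using ProvS.cut h1 hw3

lemma prov_sSup {A : Y → L} {s : Set (Y → L)} (hs : s.Finite)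
    (h : ∀ C ∈ s, ProvS S Th (A, C)) : ProvS S Th (A, sSup s) := by
  refine Set.Finite.induction_on
    (motive := fun s _ => (∀ C ∈ s, ProvS S Th (A, C)) → ProvS S Th (A, sSup s)) s hs ?_ ?_ h
  · intro _; simpa using prov_bot S Th A
  · intro C s _ _ ih hh
    rw [sSup_insert]
    exact prov_sup (hh C (Set.mem_insert _ _))
      (ih fun D hD => hh D (Set.mem_insert_of_mem _ hD))

lemma sound (hS : IsParam S) {φ : FAI L Y} (h : ProvS S Th φ) :
    ∀ M ∈ ModS S Th, Sat S M φ := by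
  induction h with
  | ax A B =>
      intro M _ p hp hle
      have h1 : (A ⊔ B : Y → L) ≤ p.2 M := (hS.1 p hp _ M).mp hle
      exact (hS.1 p hp _ M).mpr (le_trans le_sup_left h1)
  | hyp hφ => intro M hM; exact hM _ hφ
  | @cut A B C D h1 h2 ih1 ih2 =>
      intro M hM p hp hle
      have hAC : (A ⊔ C : Y → L) ≤ p.2 M := (hS.1 p hp _ M).mp hle
      have hA : p.1 A ≤ M := (hS.1 p hp _ M).mpr (le_trans le_sup_left hAC)
      have hB : p.1 B ≤ M := ih1 M hM p hp hA
      have hBC : p.1 (B ⊔ C) ≤ M := (hS.1 p hp _ M).mpr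
        (sup_le ((hS.1 p hp _ M).mp hB) (le_trans le_sup_right hAC))
      exact ih2 M hM p hp hBC
  | @mul A B p hp h ih =>
      intro M hM q hq hle
      have hcomp := hS.2.2 q hq p hp
      have := ih M hM _ hcomp
      simpa [Function.comp] using this (by simpa [Function.comp] using hle)

lemma complete (hS : IsParam S) {A C : Y → L} [Finite L] [Finite Y]
    (hEnt : ∀ M ∈ ModS S Th, Sat S M (A, C)) : ProvS S Th (A, C) := by
  set D : Y → L := sSup {C | ProvS S Th (A, C)} with hDdef
  have hD : ProvS S Th (A, D) :=
    prov_sSup (Set.toFinite _) (fun C hC => hC)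
  have hAD : A ≤ D := le_sSup (prov_refl S Th A)
  have hMod : D ∈ ModS S Th := by
    intro φ hφ p hp hle
    have h1 : ProvS S Th (p.1 φ.1, p.1 φ.2) := ProvS.mul hp (ProvS.hyp hφ)
    have h2 : ProvS S Th (p.1 φ.1 ⊔ D, p.1 φ.2) := prov_wkn D h1
    rw [sup_eq_right.mpr hle] at h2
    have h3 : ProvS S Th (A, p.1 φ.2) := prov_trans hD h2
    exact le_sSup h3
  have hSat : Sat S D (A, C) := hEnt D hMod
  have hCD : C ≤ D := hSat _ hS.2.1 hAD
  exact prov_weaken_cons hD hCD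

lemma mul_mono_right {a c c' : L} (h : c ≤ c') : a * c ≤ a * c' := by
  have h1 : a * sSup {c, c'} = ⨆ b ∈ ({c, c'} : Set L), a * b :=
    CompleteResiduatedLattice.mul_sSup a {c, c'}
  have h2 : sSup ({c, c'} : Set L) = c' := by
    rw [sSup_pair, sup_eq_right.mpr h]
  have h3 : (⨆ b ∈ ({c, c'} : Set L), a * b) = a * c ⊔ a * c' := by
    simp [iSup_or, iSup_sup_eq]
  rw [h2, h3] at h1
  rw [h1]; exact le_sup_left

lemma sat_mono (hS : IsParam S) {M A B : Y → L} {c c' : L} (hcc : c ≤ c')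
    (h : Sat S M (A, scMul c' B)) : Sat S M (A, scMul c B) := by
  intro p hp hle
  have h1 : p.1 (scMul c' B) ≤ M := h p hp hle
  have h2 : scMul c B ≤ scMul c' B := fun y => by
    simpa [scMul, mul_comm] using mul_mono_right (a := B y) hcc
  have h3 : scMul c B ≤ p.2 M := le_trans h2 ((hS.1 p hp _ M).mp h1)
  exact (hS.1 p hp _ M).mpr h3

lemma sat_sSup (hS : IsParam S) {M A B : Y → L} {s : Set L}
    (h : ∀ c ∈ s, Sat S M (A, scMul c B)) : Sat S M (A, scMul (sSup s) B) := by
  intro p hp hle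
  refine (hS.1 p hp _ M).mpr ?_
  intro y
  show scMul (sSup s) B y ≤ p.2 M y
  have hpt : scMul (sSup s) B y = ⨆ c ∈ s, B y * c := by
    simp only [scMul, mul_comm (sSup s) (B y)]
    exact CompleteResiduatedLattice.mul_sSup (B y) s
  rw [hpt]
  refine iSup₂_le fun c hc => ?_
  have h1 : p.1 (scMul c B) ≤ M := h c hc p hp hle
  have h2 : scMul c B ≤ p.2 M := (hS.1 p hp _ M).mp h1
  calc B y * c = scMul c B y := by simp [scMul, mul_comm]
    _ ≤ p.2 M y := h2 y

end Aux

/-- Pavelka-style completeness for finite L and Y: the degree of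
S-provability equals the degree of semantic entailment. -/
theorem pavelka_completeness
    {L Y : Type*} [CompleteResiduatedLattice L] [Finite L] [Finite Y] [Nonempty Y]
    (S : Set (OpPair L Y)) (hS : IsParam S)
    (Th : Set (FAI L Y)) (A B : Y → L) :
    sSup {c : L | ProvS S Th (A, scMul c B)} = entDeg S Th A B := by
  apply le_antisymm
  · refine le_iInf₂ fun M hM => ?_
    refine sSup_le_sSup fun c hc => ?_
    exact sound hS hc M hM
  · set cs := entDeg S Th A B with hcs
    have hmem : ∀ M ∈ ModS S Th, Sat S M (A, scMul cs B) := by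
      intro M hM
      have h1 : cs ≤ truthDeg S M A B := iInf₂_le M hM
      have h2 : Sat S M (A, scMul (truthDeg S M A B) B) :=
        sat_sSup hS fun c hc => hc
      exact sat_mono hS h1 h2
    exact le_sSup (complete hS hmem)

end FAIparam
end
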